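/- Let (c_k) be a nonincreasing sequence of nonnegative reals, α > 0, γ ≥ 2, and suppose that for each positive integer l, setting x_l := π / (γ^{α+1} l^α), one has |∑_{k=l+1}^{2l} c_k sin(k^α x_l)| < ε. Then c_{2l} · 2l ≤ γ^{α+1} ε. (Key step: for l+1 ≤ k ≤ 2l, the argument k^α x_l lies in (0, π/2], so sin(k^α x_l) ≥ (2/π) k^α x_l.) -/

import Mathlib

theorem stmt6 (c : ℕ → ℝ) (hnn : ∀ k, 0 ≤ c k) (hmono : ∀ k, c (k + 1) ≤ c k)
    (α γ ε : ℝ) (hα : 0 < α) (hγ : 2 ≤ γ)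
    (h : ∀ l : ℕ, 0 < l →
      |∑ k ∈ Finset.Icc (l + 1) (2 * l),
          c k * Real.sin ((k : ℝ) ^ α * (Real.pi / (γ ^ (α + 1) * (l : ℝ) ^ α)))| < ε) :
    ∀ l : ℕ, 0 < l → c (2 * l) * (2 * l : ℝ) ≤ γ ^ (α + 1) * ε := by
  intro l hl
  have hanti : Antitone c := antitone_nat_of_succ_le hmono
  have hl' : (0:ℝ) < l := by exact_mod_cast hl
  have hγ0 : (0:ℝ) < γ := by linarith
  have hγp : (0:ℝ) < γ ^ (α+1) := Real.rpow_pos_of_pos hγ0 _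
  have hlα : (0:ℝ) < (l:ℝ)^α := Real.rpow_pos_of_pos hl' _
  set x : ℝ := Real.pi / (γ ^ (α+1) * (l:ℝ)^α) with hxdef
  have hπ := Real.pi_pos
  have hxpos : 0 < x := div_pos hπ (mul_pos hγp hlα)
  have h2γ : (2:ℝ)^(α+1) ≤ γ^(α+1) :=
    Real.rpow_le_rpow (by norm_num) hγ (by linarith)
  have h2split : (2:ℝ)^(α+1) = (2:ℝ)^α * 2 := by
    rw [Real.rpow_add (by norm_num : (0:ℝ) < 2), Real.rpow_one]
  -- termwise lower bound
  have term : ∀ k ∈ Finset.Icc (l+1) (2*l),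
      c (2*l) * ((2/Real.pi) * ((l:ℝ)^α * x)) ≤ c k * Real.sin ((k:ℝ)^α * x) := by
    intro k hk
    simp only [Finset.mem_Icc] at hk
    obtain ⟨hk1, hk2⟩ := hk
    have hkpos : (0:ℝ) < k := by
      have : 0 < k := lt_of_lt_of_le (Nat.succ_pos l) hk1
      exact_mod_cast this
    have hkl : (l:ℝ) ≤ k := by exact_mod_cast le_trans (Nat.le_succ l) hk1
    have hk2' : (k:ℝ) ≤ 2 * l := by exact_mod_cast hk2
    have hklow : (l:ℝ)^α ≤ (k:ℝ)^α := Real.rpow_le_rpow hl'.le hkl hα.le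
    have hkup : (k:ℝ)^α ≤ ((2:ℝ)*l)^α := Real.rpow_le_rpow (by positivity) hk2' hα.le
    have h2l : ((2:ℝ)*l)^α = (2:ℝ)^α * (l:ℝ)^α :=
      Real.mul_rpow (by norm_num) hl'.le
    have hlx : (l:ℝ)^α * x = Real.pi / γ^(α+1) := by
      rw [hxdef]; field_simp
    have harg_le : (k:ℝ)^α * x ≤ Real.pi / 2 := by
      have h1 : (k:ℝ)^α * x ≤ (2:ℝ)^α * ((l:ℝ)^α * x) := by
        have := mul_le_mul_of_nonneg_right hkup hxpos.le
        rw [h2l] at this; linarith [this]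
      rw [hlx] at h1
      have h2 : (2:ℝ)^α * (Real.pi / γ^(α+1)) ≤ Real.pi / 2 := by
        have h2α : (0:ℝ) < (2:ℝ)^α := Real.rpow_pos_of_pos (by norm_num) _
        rw [← mul_div_assoc, div_le_div_iff₀ hγp (by norm_num : (0:ℝ) < 2)]
        nlinarith [h2γ, h2split, hπ]
      linarith
    have harg_pos : 0 < (k:ℝ)^α * x := mul_pos (Real.rpow_pos_of_pos hkpos _) hxpos
    have hsin : (2/Real.pi) * ((k:ℝ)^α * x) ≤ Real.sin ((k:ℝ)^α * x) := by
      have := Real.mul_le_sin (x := (k:ℝ)^α * x) harg_pos.le harg_le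
      linarith [this]
    have hsin2 : (2/Real.pi) * ((l:ℝ)^α * x) ≤ Real.sin ((k:ℝ)^α * x) := by
      refine le_trans ?_ hsin
      have : (l:ℝ)^α * x ≤ (k:ℝ)^α * x := mul_le_mul_of_nonneg_right hklow hxpos.le
      have h2π : (0:ℝ) < 2/Real.pi := by positivity
      nlinarith
    have hc : c (2*l) ≤ c k := hanti hk2
    have hsnn : 0 ≤ (2/Real.pi) * ((l:ℝ)^α * x) := by positivity
    exact mul_le_mul hc hsin2 hsnn (hnn k)
  have hsum := Finset.sum_le_sum term
  have hcard : (Finset.Icc (l+1) (2*l)).card = l := by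
    rw [Nat.card_Icc]; omega
  rw [Finset.sum_const, hcard, nsmul_eq_mul] at hsum
  have hlx : (l:ℝ)^α * x = Real.pi / γ^(α+1) := by
    rw [hxdef]; field_simp
  have hval : (l:ℝ) * (c (2*l) * ((2/Real.pi) * ((l:ℝ)^α * x)))
      = c (2*l) * (2 * l) / γ^(α+1) := by
    rw [hlx]; field_simp
  rw [hval] at hsum
  have habs := h l hl
  have hlt : c (2*l) * (2*l) / γ^(α+1) < ε :=
    lt_of_le_of_lt (le_trans hsum (le_abs_self _)) habs
  rw [div_lt_iff₀ hγp] at hlt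
  push_cast
  nlinarith [hlt]
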